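/- Let Assumptions (A1) and (A2) hold for cost functions E_1,…,E_M, let α > 0, p ≥ p_M and R > 0. Then there exists a constant C > 0 depending on R, M and p such that for all points (X_0^{m,i})_{m∈[M],i∈[N]} and (X_1^{m,i})_{m∈[M],i∈[N]} in ℝ^{M·N·d} with Euclidean norms at most R, and for every m ∈ [M], |X_α^m(ρ_0^m, M_0^{−m}) − X_α^m(ρ_1^m, M_1^{−m})| ≤ C Σ_{j=1}^M ( Σ_{i=1}^N |X_0^{j,i} − X_1^{j,i}|^p )^{1/p} ≤ C √(MN) |X_0 − X_1|, where for k ∈ {0,1}, ρ_k^m := (1/N) Σ_{i=1}^N δ_{X_k^{m,i}} and M_k^{−m} := (E[ρ_k^1],…,E[ρ_k^{m−1}],E[ρ_k^{m+1}],…,E[ρ_k^M]). -/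

import Mathlib

open MeasureTheory Finset
open scoped ENNReal NNReal

noncomputable section

/-- `ℝ^d` with the Euclidean norm. -/
abbrev Vec (d : ℕ) := EuclideanSpace ℝ (Fin d)

/-- `ℝ^{M·d}`, the space of opponents' strategies, with the Euclidean norm. -/
abbrev Opp (M d : ℕ) := EuclideanSpace ℝ (Fin M × Fin d)

/-- Euclidean norm of the concatenated vector `(x, y) ∈ ℝ^d × ℝ^{M·d}`. -/
def pairNorm {d M : ℕ} (x : Vec d) (y : Opp M d) : ℝ :=
  Real.sqrt (‖x‖ ^ 2 + ‖y‖ ^ 2)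

/-- Given strategies `Z^1, …, Z^{M+1}`, the vector `Z^{-m}` of all strategies except the
`m`-th one. -/
def oppOf {M d : ℕ} (m : Fin (M + 1)) (Z : Fin (M + 1) → Vec d) : Opp M d :=
  WithLp.toLp 2 (fun p : Fin M × Fin d => Z (m.succAbove p.1) p.2)

/-- The consensus point `X_α(ρ, Y) = (∫ x e^{-α E(x;Y)} dρ)/(∫ e^{-α E(x;Y)} dρ)`. -/
def consensus {d M : ℕ} (α : ℝ) (Em : Vec d → Opp M d → ℝ)
    (ρ : Measure (Vec d)) (Y : Opp M d) : Vec d :=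
  (∫ x, Real.exp (-α * Em x Y) ∂ρ)⁻¹ • ∫ x, Real.exp (-α * Em x Y) • x ∂ρ

/-- The mean `E[μ] = ∫ x dμ(x)` of a measure on `ℝ^d`. -/
def meanOf {d : ℕ} (μ : Measure (Vec d)) : Vec d := ∫ x, x ∂μ

/-- The empirical measure `(1/N) ∑_{i} δ_{X_i}`. -/
def empMeas {d N : ℕ} (X : Fin N → Vec d) : Measure (Vec d) :=
  (N : ℝ≥0∞)⁻¹ • ∑ i, Measure.dirac (X i)

/-- The `p`-Wasserstein distance, as an infimum over couplings. -/
def Wdist {d : ℕ} (p : ℝ) (μ ν : Measure (Vec d)) : ℝ :=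
  (sInf { e : ℝ≥0∞ | ∃ π : Measure (Vec d × Vec d), IsProbabilityMeasure π ∧
      π.map Prod.fst = μ ∧ π.map Prod.snd = ν ∧
      e = (∫⁻ z, (‖z.1 - z.2‖₊ : ℝ≥0∞) ^ p ∂π) ^ (1 / p) }).toReal

/-- Euclidean norm of a configuration `X = (X^{m,i}) ∈ ℝ^{(M+1)·N·d}`. -/
def confNorm {d M N : ℕ} (X : Fin (M + 1) → Fin N → Vec d) : ℝ :=
  Real.sqrt (∑ m, ∑ i, ‖X m i‖ ^ 2)

-- integral over empirical measure
lemma integral_empMeas {d N : ℕ} (hN : 0 < N) {F : Type*} [NormedAddCommGroup F]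
    [NormedSpace ℝ F] [CompleteSpace F] (X : Fin N → Vec d) (f : Vec d → F) :
    ∫ x, f x ∂(empMeas X) = (N : ℝ)⁻¹ • ∑ i, f (X i) := by
  rw [empMeas, integral_smul_measure, integral_finset_sum_measure]
  · simp [integral_dirac, ENNReal.toReal_inv]
  · intro i _
    exact (integrable_const (f (X i))).congr (ae_eq_dirac f).symm

lemma consensus_empMeas {d N M : ℕ} (hN : 0 < N) (α : ℝ) (Em : Vec d → Opp M d → ℝ)
    (X : Fin N → Vec d) (Y : Opp M d) :
    consensus α Em (empMeas X) Y
      = (∑ i, Real.exp (-α * Em (X i) Y))⁻¹ • ∑ i, Real.exp (-α * Em (X i) Y) • X i := by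
  have hN' : (N : ℝ) ≠ 0 := Nat.cast_ne_zero.mpr hN.ne'
  rw [consensus, integral_empMeas hN, integral_empMeas hN]
  rw [smul_eq_mul, mul_inv, smul_smul]
  congr 1
  rw [inv_inv, mul_comm, ← mul_assoc, inv_mul_cancel₀ hN', one_mul]

-- |exp a - exp b| ≤ exp K |a-b| for a,b ≤ K
lemma exp_lip {a b K : ℝ} (ha : a ≤ K) (hb : b ≤ K) :
    |Real.exp a - Real.exp b| ≤ Real.exp K * |a - b| := by
  wlog h : b ≤ a generalizing a b
  · rw [abs_sub_comm, abs_sub_comm a b]; exact this hb ha (le_of_not_ge h)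
  rw [abs_of_nonneg (sub_nonneg.mpr (Real.exp_le_exp.mpr h)), abs_of_nonneg (sub_nonneg.mpr h)]
  have h1 : (b - a) + 1 ≤ Real.exp (b - a) := Real.add_one_le_exp _
  have h2 : Real.exp a - Real.exp b ≤ Real.exp a * (a - b) := by
    have := mul_le_mul_of_nonneg_left h1 (Real.exp_nonneg a)
    rw [← Real.exp_add] at this
    have e : a + (b - a) = b := by ring
    rw [e] at this
    nlinarith [Real.exp_pos a]
  calc Real.exp a - Real.exp b ≤ Real.exp a * (a - b) := h2
    _ ≤ Real.exp K * (a - b) :=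
        mul_le_mul_of_nonneg_right (Real.exp_le_exp.mpr ha) (by linarith)

-- ℓᵖ facts
lemma le_rpow_sum {N : ℕ} {p : ℝ} (hp : 1 ≤ p) (a : Fin N → ℝ) (ha : ∀ i, 0 ≤ a i)
    (k : Fin N) : a k ≤ (∑ i, a i ^ p) ^ (1 / p) := by
  have hp0 : p ≠ 0 := by linarith
  have h : a k ^ p ≤ ∑ i, a i ^ p :=
    Finset.single_le_sum (f := fun i => a i ^ p) (fun i _ => Real.rpow_nonneg (ha i) p)
      (Finset.mem_univ k)
  calc a k = (a k ^ p) ^ (1/p) := by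
        rw [one_div, Real.rpow_rpow_inv (ha k) hp0]
    _ ≤ (∑ i, a i ^ p) ^ (1/p) :=
        Real.rpow_le_rpow (Real.rpow_nonneg (ha k) p) h (by positivity)

lemma rpow_sum_le {N : ℕ} {p : ℝ} (hp : 1 ≤ p) (a : Fin N → ℝ) (ha : ∀ i, 0 ≤ a i) :
    (∑ i, a i ^ p) ^ (1 / p) ≤ ∑ i, a i := by
  have hp0 : p ≠ 0 := by linarith
  have hS : 0 ≤ ∑ i, a i := Finset.sum_nonneg fun i _ => ha i
  have key : ∑ i, a i ^ p ≤ (∑ i, a i) ^ p := by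
    rcases eq_or_lt_of_le hS with h0 | h0
    · have hz : ∀ i, a i = 0 := by
        intro i
        have := Finset.single_le_sum (f := a) (fun j _ => ha j) (Finset.mem_univ i)
        linarith [ha i]
      simp only [hz, Real.zero_rpow hp0, Finset.sum_const, smul_zero]
      exact le_refl 0

    · have hS0 : (∑ i, a i) ≠ 0 := ne_of_gt h0
      calc ∑ i, a i ^ p ≤ ∑ i, a i * (∑ j, a j) ^ (p - 1) := by
            refine Finset.sum_le_sum fun i _ => ?_
            rcases eq_or_lt_of_le (ha i) with hi | hi
            · rw [← hi, Real.zero_rpow hp0, zero_mul]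
            · have e1 : a i ^ p = a i ^ (p - 1) * a i := by
                have := Real.rpow_sub_one (ne_of_gt hi) p
                rw [this]; field_simp
              rw [e1, mul_comm (a i)]
              refine mul_le_mul_of_nonneg_right ?_ (le_of_lt hi)
              exact Real.rpow_le_rpow (le_of_lt hi)
                (Finset.single_le_sum (f := a) (fun j _ => ha j) (Finset.mem_univ i))
                (by linarith)
        _ = (∑ i, a i) * (∑ j, a j) ^ (p - 1) := by rw [← Finset.sum_mul]
        _ = (∑ i, a i) ^ p := by
            have := Real.rpow_sub_one hS0 p
            rw [this]; field_simp
  calc (∑ i, a i ^ p) ^ (1/p) ≤ ((∑ i, a i) ^ p) ^ (1/p) :=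
        Real.rpow_le_rpow (Finset.sum_nonneg fun i _ => Real.rpow_nonneg (ha i) p) key
          (by positivity)
    _ = ∑ i, a i := by rw [one_div, Real.rpow_rpow_inv hS hp0]

lemma sqrt_sum_sq_le_sum {n : ℕ} (f : Fin n → ℝ) (hf : ∀ i, 0 ≤ f i) :
    Real.sqrt (∑ i, f i ^ 2) ≤ ∑ i, f i := by
  rw [show (∑ i, f i) = Real.sqrt ((∑ i, f i)^2) by
    rw [Real.sqrt_sq (Finset.sum_nonneg fun i _ => hf i)]]
  exact Real.sqrt_le_sqrt (Finset.sum_sq_le_sq_sum_of_nonneg fun i _ => hf i)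

lemma quot_est {d N : ℕ} (hN : 0 < N) (w₀ w₁ : Fin N → ℝ) (x₀ x₁ : Fin N → Vec d)
    {wmin wmax R Lw δ : ℝ} (hwmin : 0 < wmin) (hR : 0 ≤ R) (hδ : 0 ≤ δ) (hLw : 0 ≤ Lw)
    (hw₀ : ∀ i, wmin ≤ w₀ i ∧ w₀ i ≤ wmax) (hw₁ : ∀ i, wmin ≤ w₁ i ∧ w₁ i ≤ wmax)
    (hx₀ : ∀ i, ‖x₀ i‖ ≤ R) (hx₁ : ∀ i, ‖x₁ i‖ ≤ R)
    (hΔw : ∀ i, |w₀ i - w₁ i| ≤ Lw * δ) (hΔx : ∀ i, ‖x₀ i - x₁ i‖ ≤ δ) :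
    ‖(∑ i, w₀ i)⁻¹ • (∑ i, w₀ i • x₀ i) - (∑ i, w₁ i)⁻¹ • (∑ i, w₁ i • x₁ i)‖
      ≤ ((wmax + Lw * R) / wmin + Lw * wmax * R / wmin ^ 2) * δ := by
  set n : ℝ := (N : ℝ) with hn
  have hn1 : 1 ≤ n := by rw [hn]; exact_mod_cast hN
  have hn0 : 0 < n := by linarith
  set S₀ := ∑ i, w₀ i with hS₀def
  set S₁ := ∑ i, w₁ i with hS₁def
  set T₀ := ∑ i, w₀ i • x₀ i with hT₀def
  set T₁ := ∑ i, w₁ i • x₁ i with hT₁def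
  have hwmax : wmin ≤ wmax := le_trans (hw₀ ⟨0, hN⟩).1 (hw₀ ⟨0, hN⟩).2
  have hwmax0 : 0 < wmax := lt_of_lt_of_le hwmin hwmax
  have hSge : ∀ (w : Fin N → ℝ), (∀ i, wmin ≤ w i ∧ w i ≤ wmax) →
      n * wmin ≤ ∑ i, w i ∧ ∑ i, w i ≤ n * wmax := by
    intro w hw
    constructor
    · calc n * wmin = ∑ _i : Fin N, wmin := by
            rw [Finset.sum_const, Finset.card_univ, Fintype.card_fin, nsmul_eq_mul]
      _ ≤ ∑ i, w i := Finset.sum_le_sum fun i _ => (hw i).1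
    · calc (∑ i, w i) ≤ ∑ _i : Fin N, wmax := Finset.sum_le_sum fun i _ => (hw i).2
      _ = n * wmax := by
            rw [Finset.sum_const, Finset.card_univ, Fintype.card_fin, nsmul_eq_mul]
  have hS₀ := hSge w₀ hw₀
  have hS₁ := hSge w₁ hw₁
  have hS₀pos : 0 < S₀ := lt_of_lt_of_le (by positivity) hS₀.1
  have hS₁pos : 0 < S₁ := lt_of_lt_of_le (by positivity) hS₁.1
  have hkey : S₀⁻¹ • T₀ - S₁⁻¹ • T₁ = S₀⁻¹ • (T₀ - T₁) + (S₀⁻¹ - S₁⁻¹) • T₁ := by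
    rw [smul_sub, sub_smul]; abel
  have hΔT : ‖T₀ - T₁‖ ≤ n * ((wmax + Lw * R) * δ) := by
    rw [hT₀def, hT₁def, ← Finset.sum_sub_distrib]
    calc ‖∑ i, (w₀ i • x₀ i - w₁ i • x₁ i)‖ ≤ ∑ i, ‖w₀ i • x₀ i - w₁ i • x₁ i‖ :=
          norm_sum_le _ _
      _ ≤ ∑ _i : Fin N, (wmax + Lw * R) * δ := by
          refine Finset.sum_le_sum fun i _ => ?_
          have e : w₀ i • x₀ i - w₁ i • x₁ i = w₀ i • (x₀ i - x₁ i) + (w₀ i - w₁ i) • x₁ i := by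
            rw [smul_sub, sub_smul]; abel
          rw [e]
          calc ‖w₀ i • (x₀ i - x₁ i) + (w₀ i - w₁ i) • x₁ i‖
              ≤ ‖w₀ i • (x₀ i - x₁ i)‖ + ‖(w₀ i - w₁ i) • x₁ i‖ := norm_add_le _ _
            _ = |w₀ i| * ‖x₀ i - x₁ i‖ + |w₀ i - w₁ i| * ‖x₁ i‖ := by
                rw [norm_smul, norm_smul, Real.norm_eq_abs, Real.norm_eq_abs]
            _ ≤ wmax * δ + (Lw * δ) * R := by
                have h1 : |w₀ i| = w₀ i := abs_of_pos (lt_of_lt_of_le hwmin (hw₀ i).1)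
                refine add_le_add ?_ ?_
                · rw [h1]
                  exact mul_le_mul (hw₀ i).2 (hΔx i) (norm_nonneg _) (le_of_lt hwmax0)
                · exact mul_le_mul (hΔw i) (hx₁ i) (norm_nonneg _) (by positivity)
            _ = (wmax + Lw * R) * δ := by ring
      _ = n * ((wmax + Lw * R) * δ) := by
          rw [Finset.sum_const, Finset.card_univ, Fintype.card_fin, nsmul_eq_mul]
  have hT₁n : ‖T₁‖ ≤ n * (wmax * R) := by
    calc ‖T₁‖ ≤ ∑ i, ‖w₁ i • x₁ i‖ := norm_sum_le _ _
      _ ≤ ∑ _i : Fin N, wmax * R := by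
          refine Finset.sum_le_sum fun i _ => ?_
          rw [norm_smul, Real.norm_eq_abs, abs_of_pos (lt_of_lt_of_le hwmin (hw₁ i).1)]
          exact mul_le_mul (hw₁ i).2 (hx₁ i) (norm_nonneg _) (le_of_lt hwmax0)
      _ = n * (wmax * R) := by
          rw [Finset.sum_const, Finset.card_univ, Fintype.card_fin, nsmul_eq_mul]
  have hΔS : |S₀ - S₁| ≤ n * (Lw * δ) := by
    rw [hS₀def, hS₁def, ← Finset.sum_sub_distrib]
    calc |∑ i, (w₀ i - w₁ i)| ≤ ∑ i, |w₀ i - w₁ i| := Finset.abs_sum_le_sum_abs _ _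
      _ ≤ ∑ _i : Fin N, Lw * δ := Finset.sum_le_sum fun i _ => hΔw i
      _ = n * (Lw * δ) := by
          rw [Finset.sum_const, Finset.card_univ, Fintype.card_fin, nsmul_eq_mul]
  have hinv₀ : S₀⁻¹ ≤ (n * wmin)⁻¹ := inv_anti₀ (by positivity) hS₀.1
  have hinv₁ : S₁⁻¹ ≤ (n * wmin)⁻¹ := inv_anti₀ (by positivity) hS₁.1
  have hΔinv : |S₀⁻¹ - S₁⁻¹| ≤ n * (Lw * δ) * ((n * wmin)⁻¹ * (n * wmin)⁻¹) := by
    have e : S₀⁻¹ - S₁⁻¹ = (S₁ - S₀) * (S₀⁻¹ * S₁⁻¹) := by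
      field_simp
    rw [e, abs_mul, abs_sub_comm]
    refine mul_le_mul hΔS ?_ (abs_nonneg _) (by positivity)
    rw [abs_of_pos (by positivity)]
    exact mul_le_mul hinv₀ hinv₁ (by positivity) (by positivity)
  calc ‖S₀⁻¹ • T₀ - S₁⁻¹ • T₁‖
      ≤ |S₀⁻¹| * ‖T₀ - T₁‖ + |S₀⁻¹ - S₁⁻¹| * ‖T₁‖ := by
        rw [hkey]
        refine le_trans (norm_add_le _ _) ?_
        rw [norm_smul, norm_smul, Real.norm_eq_abs, Real.norm_eq_abs]
    _ ≤ (n * wmin)⁻¹ * (n * ((wmax + Lw * R) * δ))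
        + (n * (Lw * δ) * ((n * wmin)⁻¹ * (n * wmin)⁻¹)) * (n * (wmax * R)) := by
        refine add_le_add ?_ ?_
        · refine mul_le_mul ?_ hΔT (norm_nonneg _) (by positivity)
          rw [abs_of_pos (by positivity)]; exact hinv₀
        · exact mul_le_mul hΔinv hT₁n (norm_nonneg _) (by positivity)
    _ = ((wmax + Lw * R) / wmin + Lw * wmax * R / wmin ^ 2) * δ := by
        field_simp

lemma opp_norm_sq {M d : ℕ} (m : Fin (M + 1)) (Z : Fin (M + 1) → Vec d) :
    ‖oppOf m Z‖ ^ 2 = ∑ q : Fin M, ‖Z (m.succAbove q)‖ ^ 2 := by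
  rw [EuclideanSpace.norm_eq, Real.sq_sqrt (by positivity), Fintype.sum_prod_type]
  refine Finset.sum_congr rfl fun q _ => ?_
  rw [EuclideanSpace.norm_eq, Real.sq_sqrt (by positivity)]
  rfl

lemma conf_pt {d M N : ℕ} {X : Fin (M + 1) → Fin N → Vec d} {r : ℝ}
    (hX : confNorm X ≤ r) (j : Fin (M + 1)) (i : Fin N) : ‖X j i‖ ≤ r := by
  refine le_trans ?_ hX
  rw [confNorm, ← Real.sqrt_sq (norm_nonneg (X j i))]
  apply Real.sqrt_le_sqrt
  calc ‖X j i‖ ^ 2 ≤ ∑ i', ‖X j i'‖ ^ 2 :=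
        Finset.single_le_sum (f := fun i' => ‖X j i'‖ ^ 2) (fun _ _ => by positivity)
          (Finset.mem_univ i)
    _ ≤ ∑ m', ∑ i', ‖X m' i'‖ ^ 2 :=
        Finset.single_le_sum (f := fun m' => ∑ i', ‖X m' i'‖ ^ 2)
          (fun _ _ => by positivity) (Finset.mem_univ j)

lemma conf_mean {d M N : ℕ} (hN : 0 < N) {X : Fin (M + 1) → Fin N → Vec d} {r : ℝ}
    (hr : 0 ≤ r) (hX : confNorm X ≤ r) (j : Fin (M + 1)) :
    ‖(N : ℝ)⁻¹ • ∑ i, X j i‖ ≤ r := by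
  rw [norm_smul, Real.norm_eq_abs]
  have hn0 : (0:ℝ) < (N:ℝ) := by exact_mod_cast hN
  rw [abs_of_pos (by positivity)]
  calc (N:ℝ)⁻¹ * ‖∑ i, X j i‖ ≤ (N:ℝ)⁻¹ * ∑ i, ‖X j i‖ := by
        refine mul_le_mul_of_nonneg_left (norm_sum_le _ _) (by positivity)
    _ ≤ (N:ℝ)⁻¹ * ∑ _i : Fin N, r := by
        refine mul_le_mul_of_nonneg_left
          (Finset.sum_le_sum fun i _ => conf_pt hX j i) (by positivity)
    _ = (N:ℝ)⁻¹ * ((N:ℝ) * r) := by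
        rw [Finset.sum_const, Finset.card_univ, Fintype.card_fin, nsmul_eq_mul]
    _ = r := by field_simp

-- bound on pairNorm given component bounds, with Y built from oppOf
lemma pair_opp_bound {d M N : ℕ} (hN : 0 < N) {x : Vec d} {Z : Fin (M+1) → Vec d} {r : ℝ}
    (hr : 0 ≤ r) (hx : ‖x‖ ≤ r) (hZ : ∀ j, ‖Z j‖ ≤ r) (m : Fin (M+1)) :
    pairNorm x (oppOf m Z) ≤ Real.sqrt ((M:ℝ) + 1) * r := by
  have hY : ‖oppOf m Z‖ ^ 2 ≤ (M:ℝ) * r ^ 2 := by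
    rw [opp_norm_sq]
    calc (∑ q : Fin M, ‖Z (m.succAbove q)‖ ^ 2) ≤ ∑ _q : Fin M, r ^ 2 :=
          Finset.sum_le_sum fun q _ => by
            have := hZ (m.succAbove q); nlinarith [norm_nonneg (Z (m.succAbove q))]
      _ = (M:ℝ) * r ^ 2 := by
          rw [Finset.sum_const, Finset.card_univ, Fintype.card_fin, nsmul_eq_mul]
  rw [pairNorm]
  calc Real.sqrt (‖x‖ ^ 2 + ‖oppOf m Z‖ ^ 2) ≤ Real.sqrt (r ^ 2 + (M:ℝ) * r ^ 2) := by
        apply Real.sqrt_le_sqrt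
        nlinarith [norm_nonneg x]
    _ = Real.sqrt ((M:ℝ) + 1) * r := by
        rw [show r ^ 2 + (M:ℝ) * r ^ 2 = ((M:ℝ) + 1) * r ^ 2 by ring,
          Real.sqrt_mul (by positivity), Real.sqrt_sq hr]


/-- local Lipschitz property of the consensus points of the empirical
measures, with an explicit Wasserstein-type intermediate bound. -/
theorem stmt16 {d N M : ℕ} (hd : 0 < d) (hN : 0 < N)
    (α : ℝ) (hα : 0 < α)
    (E : Fin (M + 1) → Vec d → Opp M d → ℝ)
    (hE : ∀ m, Measurable (Function.uncurry (E m)))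
    -- Assumption (A1)
    (C₁ s : ℝ) (hC₁ : 0 < C₁) (hs : 0 ≤ s)
    (hA1 : ∀ (m : Fin (M + 1)) (x₀ x₁ : Vec d) (y₀ y₁ : Opp M d),
      |E m x₀ y₀ - E m x₁ y₁| ≤
        C₁ * (1 + pairNorm x₀ y₀ + pairNorm x₁ y₁) ^ s * pairNorm (x₀ - x₁) (y₀ - y₁))
    -- Assumption (A2)
    (ℓ c G : ℝ) (hℓ : 0 ≤ ℓ) (hc : 0 < c) (hG : 0 < G)
    (hA2 : ∀ (m : Fin (M + 1)) (x : Vec d) (y : Opp M d),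
      (1 / c) * (pairNorm x y ^ ℓ - G) ≤ E m x y ∧ E m x y ≤ c * (pairNorm x y ^ ℓ + G))
    (p R : ℝ) (hp : (if ℓ = 0 then 2 + s else 1) ≤ p) (hR : 0 < R) :
    ∃ C > (0 : ℝ), ∀ (X₀ X₁ : Fin (M + 1) → Fin N → Vec d),
      confNorm X₀ ≤ R → confNorm X₁ ≤ R →
      ∀ m : Fin (M + 1),
        ‖consensus α (E m) (empMeas (X₀ m)) (oppOf m fun j => (N : ℝ)⁻¹ • ∑ i, X₀ j i) -
            consensus α (E m) (empMeas (X₁ m)) (oppOf m fun j => (N : ℝ)⁻¹ • ∑ i, X₁ j i)‖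
          ≤ C * ∑ j, (∑ i, ‖X₀ j i - X₁ j i‖ ^ p) ^ (1 / p) ∧
        C * ∑ j, (∑ i, ‖X₀ j i - X₁ j i‖ ^ p) ^ (1 / p)
          ≤ C * Real.sqrt (((M : ℝ) + 1) * N) * confNorm (X₀ - X₁) := by
  have hp1 : 1 ≤ p := by
    by_cases h : ℓ = 0
    · rw [if_pos h] at hp; linarith
    · rw [if_neg h] at hp; linarith
  have hNpos : (0:ℝ) < (N:ℝ) := by exact_mod_cast hN
  set RM := Real.sqrt ((M:ℝ) + 1) with hRM
  have hM0 : (0:ℝ) ≤ (M:ℝ) := Nat.cast_nonneg M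
  have hRM1 : 1 ≤ RM := by
    have h := Real.sqrt_le_sqrt (by linarith : (1:ℝ) ≤ (M:ℝ) + 1)
    rwa [Real.sqrt_one] at h
  have hRM0 : 0 < RM := lt_of_lt_of_le one_pos hRM1
  set B := RM * R with hB
  have hB0 : 0 < B := by positivity
  set K := α * G / c with hK
  set wmax := Real.exp K with hwmaxdef
  set wmin := Real.exp (-(α * c * (B ^ ℓ + G))) with hwmindef
  have hwmin0 : 0 < wmin := Real.exp_pos _
  have hwmax0 : 0 < wmax := Real.exp_pos _
  set LE := C₁ * (1 + 2 * B) ^ s with hLEdef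
  have hLE0 : 0 ≤ LE := mul_nonneg hC₁.le (Real.rpow_nonneg (by linarith) s)
  set Lw := α * wmax * LE * RM with hLwdef
  have hLw0 : 0 ≤ Lw := by positivity
  set C₀ := (wmax + Lw * R) / wmin + Lw * wmax * R / wmin ^ 2 with hC₀def
  have hC₀0 : 0 ≤ C₀ := by positivity
  refine ⟨(C₀ + 1) * Real.sqrt (N:ℝ), mul_pos (by linarith) (Real.sqrt_pos.mpr hNpos), ?_⟩
  intro X₀ X₁ h₀ h₁ m
  set Y₀ := oppOf m (fun j => (N:ℝ)⁻¹ • ∑ i, X₀ j i) with hY₀def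
  set Y₁ := oppOf m (fun j => (N:ℝ)⁻¹ • ∑ i, X₁ j i) with hY₁def
  set δ := confNorm (X₀ - X₁) with hδdef
  have hδ0 : 0 ≤ δ := Real.sqrt_nonneg _
  have hΔpt : ∀ (j : Fin (M+1)) (i : Fin N), ‖X₀ j i - X₁ j i‖ ≤ δ := fun j i =>
    conf_pt (X := X₀ - X₁) (le_refl δ) j i
  -- pairNorm bounds
  have hpn₀ : ∀ i, pairNorm (X₀ m i) Y₀ ≤ B := by
    intro i
    rw [hB]
    exact pair_opp_bound hN hR.le (conf_pt h₀ m i) (fun j => conf_mean hN hR.le h₀ j) m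
  have hpn₁ : ∀ i, pairNorm (X₁ m i) Y₁ ≤ B := by
    intro i
    rw [hB]
    exact pair_opp_bound hN hR.le (conf_pt h₁ m i) (fun j => conf_mean hN hR.le h₁ j) m
  -- weight bounds
  have wbound : ∀ (x : Vec d) (Y : Opp M d), pairNorm x Y ≤ B →
      (wmin ≤ Real.exp (-α * E m x Y) ∧ Real.exp (-α * E m x Y) ≤ wmax) ∧
        -α * E m x Y ≤ K := by
    intro x Y hpn
    have hpn0 : 0 ≤ pairNorm x Y := Real.sqrt_nonneg _
    have ht0 : 0 ≤ pairNorm x Y ^ ℓ := Real.rpow_nonneg hpn0 _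
    have htB : pairNorm x Y ^ ℓ ≤ B ^ ℓ := Real.rpow_le_rpow hpn0 hpn hℓ
    obtain ⟨hlow, hhigh⟩ := hA2 m x Y
    have h1 : -α * E m x Y ≤ K := by
      have step := mul_le_mul_of_nonpos_left hlow (by linarith : -α ≤ 0)
      have e : -α * ((1/c) * (pairNorm x Y ^ ℓ - G)) =
          α * G / c - α * (pairNorm x Y ^ ℓ) / c := by ring
      rw [e] at step
      have : 0 ≤ α * (pairNorm x Y ^ ℓ) / c := by positivity
      rw [hK]; linarith
    have h2 : -(α * c * (B ^ ℓ + G)) ≤ -α * E m x Y := by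
      have step := mul_le_mul_of_nonpos_left hhigh (by linarith : -α ≤ 0)
      have h3 : α * c * (pairNorm x Y ^ ℓ + G) ≤ α * c * (B ^ ℓ + G) :=
        mul_le_mul_of_nonneg_left (by linarith) (by positivity)
      have e : -α * (c * (pairNorm x Y ^ ℓ + G)) = -(α * c * (pairNorm x Y ^ ℓ + G)) := by
        ring
      rw [e] at step
      linarith
    exact ⟨⟨by rw [hwmindef]; exact Real.exp_le_exp.mpr h2,
      by rw [hwmaxdef]; exact Real.exp_le_exp.mpr h1⟩, h1⟩
  -- difference of Y's
  have hmean_sub : ∀ j : Fin (M+1), ((N:ℝ)⁻¹ • ∑ i, X₀ j i) - ((N:ℝ)⁻¹ • ∑ i, X₁ j i)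
      = (N:ℝ)⁻¹ • ∑ i, (X₀ j i - X₁ j i) := by
    intro j
    rw [← smul_sub, ← Finset.sum_sub_distrib]
  have hYsub : Y₀ - Y₁ = oppOf m (fun j => (N:ℝ)⁻¹ • ∑ i, (X₀ j i - X₁ j i)) := by
    ext q
    exact congrArg (fun v => v q.2) (hmean_sub (m.succAbove q.1))
  have hΔmean : ∀ j : Fin (M+1), ‖(N:ℝ)⁻¹ • ∑ i, (X₀ j i - X₁ j i)‖ ≤ δ := fun j =>
    conf_mean hN hδ0 (X := X₀ - X₁) (le_refl δ) j
  have hpnΔ : ∀ i, pairNorm (X₀ m i - X₁ m i) (Y₀ - Y₁) ≤ RM * δ := by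
    intro i
    rw [hYsub, hRM]
    exact pair_opp_bound hN hδ0 (hΔpt m i) hΔmean m
  -- weight difference bound
  have hΔw : ∀ i, |Real.exp (-α * E m (X₀ m i) Y₀) - Real.exp (-α * E m (X₁ m i) Y₁)|
      ≤ Lw * δ := by
    intro i
    have hb₀ := wbound (X₀ m i) Y₀ (hpn₀ i)
    have hb₁ := wbound (X₁ m i) Y₁ (hpn₁ i)
    calc |Real.exp (-α * E m (X₀ m i) Y₀) - Real.exp (-α * E m (X₁ m i) Y₁)|
        ≤ Real.exp K * |(-α * E m (X₀ m i) Y₀) - (-α * E m (X₁ m i) Y₁)| :=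
          exp_lip hb₀.2 hb₁.2
      _ = wmax * (α * |E m (X₀ m i) Y₀ - E m (X₁ m i) Y₁|) := by
          rw [← hwmaxdef, show (-α * E m (X₀ m i) Y₀) - (-α * E m (X₁ m i) Y₁)
            = -α * (E m (X₀ m i) Y₀ - E m (X₁ m i) Y₁) by ring, abs_mul, abs_neg,
            abs_of_pos hα]
      _ ≤ wmax * (α * (C₁ * (1 + pairNorm (X₀ m i) Y₀ + pairNorm (X₁ m i) Y₁) ^ s *
            pairNorm (X₀ m i - X₁ m i) (Y₀ - Y₁))) := by
          refine mul_le_mul_of_nonneg_left (mul_le_mul_of_nonneg_left ?_ hα.le) hwmax0.le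
          exact hA1 m (X₀ m i) (X₁ m i) Y₀ Y₁
      _ ≤ wmax * (α * (C₁ * (1 + 2 * B) ^ s * (RM * δ))) := by
          refine mul_le_mul_of_nonneg_left (mul_le_mul_of_nonneg_left ?_ hα.le) hwmax0.le
          have hbase : (1 + pairNorm (X₀ m i) Y₀ + pairNorm (X₁ m i) Y₁) ^ s
              ≤ (1 + 2 * B) ^ s := by
            refine Real.rpow_le_rpow ?_ ?_ hs
            · have := Real.sqrt_nonneg (‖X₀ m i‖ ^ 2 + ‖Y₀‖ ^ 2)
              have := Real.sqrt_nonneg (‖X₁ m i‖ ^ 2 + ‖Y₁‖ ^ 2)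
              simp only [pairNorm] at *
              linarith
            · have := hpn₀ i; have := hpn₁ i; linarith
          refine mul_le_mul (mul_le_mul_of_nonneg_left hbase hC₁.le) (hpnΔ i)
            (Real.sqrt_nonneg _) ?_
          positivity
      _ = Lw * δ := by rw [hLwdef, hLEdef]; ring
  -- main Lipschitz bound
  have main1 : ‖consensus α (E m) (empMeas (X₀ m)) Y₀ - consensus α (E m) (empMeas (X₁ m)) Y₁‖
      ≤ C₀ * δ := by
    rw [consensus_empMeas hN, consensus_empMeas hN, hC₀def]
    exact quot_est hN _ _ (fun i => X₀ m i) (fun i => X₁ m i) hwmin0 hR.le hδ0 hLw0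
      (fun i => (wbound (X₀ m i) Y₀ (hpn₀ i)).1) (fun i => (wbound (X₁ m i) Y₁ (hpn₁ i)).1)
      (fun i => conf_pt h₀ m i) (fun i => conf_pt h₁ m i) hΔw (fun i => hΔpt m i)
  -- the sums S_j
  set S : Fin (M+1) → ℝ := fun j => (∑ i, ‖X₀ j i - X₁ j i‖ ^ p) ^ (1/p) with hSdef
  have hS0 : ∀ j, 0 ≤ S j := fun j =>
    Real.rpow_nonneg (Finset.sum_nonneg fun i _ => Real.rpow_nonneg (norm_nonneg _) p) _
  have hSsum0 : 0 ≤ ∑ j, S j := Finset.sum_nonneg fun j _ => hS0 j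
  have haS : ∀ j i, ‖X₀ j i - X₁ j i‖ ≤ S j := fun j i =>
    le_rpow_sum hp1 (fun i => ‖X₀ j i - X₁ j i‖) (fun i => norm_nonneg _) i
  have hconf : δ = Real.sqrt (∑ j, ∑ i, ‖X₀ j i - X₁ j i‖ ^ 2) := rfl
  -- δ ≤ √N ∑ S j
  have hE1 : δ ≤ Real.sqrt (N:ℝ) * ∑ j, S j := by
    rw [hconf]
    calc Real.sqrt (∑ j, ∑ i, ‖X₀ j i - X₁ j i‖ ^ 2)
        ≤ Real.sqrt ((N:ℝ) * ∑ j, S j ^ 2) := by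
          apply Real.sqrt_le_sqrt
          rw [Finset.mul_sum]
          refine Finset.sum_le_sum fun j _ => ?_
          calc (∑ i, ‖X₀ j i - X₁ j i‖ ^ 2) ≤ ∑ _i : Fin N, S j ^ 2 := by
                refine Finset.sum_le_sum fun i _ => ?_
                have := haS j i
                nlinarith [norm_nonneg (X₀ j i - X₁ j i)]
            _ = (N:ℝ) * S j ^ 2 := by
                rw [Finset.sum_const, Finset.card_univ, Fintype.card_fin, nsmul_eq_mul]
      _ = Real.sqrt (N:ℝ) * Real.sqrt (∑ j, S j ^ 2) := Real.sqrt_mul (by positivity) _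
      _ ≤ Real.sqrt (N:ℝ) * ∑ j, S j := by
          exact mul_le_mul_of_nonneg_left (sqrt_sum_sq_le_sum S hS0) (Real.sqrt_nonneg _)
  -- ∑ S j ≤ √((M+1)N) δ
  have hE2 : ∑ j, S j ≤ Real.sqrt (((M:ℝ) + 1) * N) * δ := by
    have step1 : ∑ j, S j ≤ ∑ j, ∑ i, ‖X₀ j i - X₁ j i‖ := by
      refine Finset.sum_le_sum fun j _ => ?_
      exact rpow_sum_le hp1 (fun i => ‖X₀ j i - X₁ j i‖) (fun i => norm_nonneg _)
    have cheb : (∑ j, ∑ i, ‖X₀ j i - X₁ j i‖) ^ 2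
        ≤ (((M:ℝ) + 1) * N) * ∑ j, ∑ i, ‖X₀ j i - X₁ j i‖ ^ 2 := by
      have := sq_sum_le_card_mul_sum_sq (s := (Finset.univ : Finset (Fin (M+1) × Fin N)))
        (f := fun q : Fin (M+1) × Fin N => ‖X₀ q.1 q.2 - X₁ q.1 q.2‖)
      rw [← Fintype.sum_prod_type (f := fun q : Fin (M+1) × Fin N => ‖X₀ q.1 q.2 - X₁ q.1 q.2‖),
        ← Fintype.sum_prod_type (f := fun q : Fin (M+1) × Fin N => ‖X₀ q.1 q.2 - X₁ q.1 q.2‖ ^ 2)]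
      refine le_trans this ?_
      have hcard : ((Finset.univ : Finset (Fin (M+1) × Fin N)).card : ℝ)
          = ((M:ℝ) + 1) * N := by
        rw [Finset.card_univ, Fintype.card_prod, Fintype.card_fin, Fintype.card_fin]
        push_cast; ring
      rw [hcard]
    have hsum0 : 0 ≤ ∑ j, ∑ i, ‖X₀ j i - X₁ j i‖ :=
      Finset.sum_nonneg fun j _ => Finset.sum_nonneg fun i _ => norm_nonneg _
    calc ∑ j, S j ≤ ∑ j, ∑ i, ‖X₀ j i - X₁ j i‖ := step1
      _ = Real.sqrt ((∑ j, ∑ i, ‖X₀ j i - X₁ j i‖) ^ 2) := (Real.sqrt_sq hsum0).symm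
      _ ≤ Real.sqrt ((((M:ℝ) + 1) * N) * ∑ j, ∑ i, ‖X₀ j i - X₁ j i‖ ^ 2) :=
          Real.sqrt_le_sqrt cheb
      _ = Real.sqrt (((M:ℝ) + 1) * N) * δ := by
          rw [Real.sqrt_mul (by positivity), ← hconf]
  clear_value RM B K wmax wmin LE Lw C₀ Y₀ Y₁ δ S
  constructor
  · calc ‖consensus α (E m) (empMeas (X₀ m)) Y₀ - consensus α (E m) (empMeas (X₁ m)) Y₁‖
        ≤ C₀ * δ := main1
      _ ≤ C₀ * (Real.sqrt (N:ℝ) * ∑ j, S j) := mul_le_mul_of_nonneg_left hE1 hC₀0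
      _ ≤ (C₀ + 1) * (Real.sqrt (N:ℝ) * ∑ j, S j) := by
          refine mul_le_mul_of_nonneg_right (by linarith) ?_
          exact mul_nonneg (Real.sqrt_nonneg _) hSsum0
      _ = (C₀ + 1) * Real.sqrt (N:ℝ) * ∑ j, S j := by ring
  · calc (C₀ + 1) * Real.sqrt (N:ℝ) * ∑ j, S j
        ≤ (C₀ + 1) * Real.sqrt (N:ℝ) * (Real.sqrt (((M:ℝ) + 1) * N) * δ) := by
          refine mul_le_mul_of_nonneg_left hE2 (by positivity)
      _ = (C₀ + 1) * Real.sqrt (N:ℝ) * Real.sqrt (((M:ℝ) + 1) * N) * δ := by ring
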